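/- Let ρ₁ be a limit cardinal and ρ₂, ρ₃, ρ₄ cardinals with ρ₁ > ρ₂ ≥ ρ₃ ≥ ω, ρ₃ ≥ ρ₄ ≥ 2, and cf(ρ₁) ≥ ρ₃. Then cov(ρ₁, ρ₂, ρ₃, ρ₄) = sup { cov(ρ, ρ₂, ρ₃, ρ₄) : ρ₂ ≤ ρ < ρ₁ }. -/

import Mathlib

open Cardinal

noncomputable section

/-- The covering number `cov(ρ₁, ρ₂, ρ₃, ρ₄)`: least cardinality of `X ⊆ P_{ρ₂}(ρ₁)`
such that every `b ∈ P_{ρ₃}(ρ₁)` is covered by the union of fewer than `ρ₄` members of `X`. -/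
def cov (r1 r2 r3 r4 : Cardinal) : Cardinal :=
  sInf { c | ∃ X : Set (Set r1.out),
    (∀ x ∈ X, #x < r2) ∧
    (∀ b : Set r1.out, #b < r3 → ∃ Q : Set (Set r1.out), Q ⊆ X ∧ #Q < r4 ∧ b ⊆ ⋃₀ Q) ∧
    #X = c }

/-- The meeting number `m(ρ, λ)`. -/
def meet (ρ lam : Cardinal) : Cardinal :=
  sInf { c | ∃ Q : Set (Set lam.out),
    (∀ q ∈ Q, #q = ρ) ∧
    (∀ b : Set lam.out, #b = ρ → ∃ q ∈ Q, #(↥(b ∩ q)) = ρ) ∧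
    #Q = c }

/-- The density number `d(ρ, λ)`. -/
def dens (ρ lam : Cardinal) : Cardinal :=
  sInf { c | ∃ Q : Set (Set lam.out),
    (∀ q ∈ Q, #q = ρ) ∧
    (∀ b : Set lam.out, #b = ρ → ∃ q ∈ Q, q ⊆ b) ∧
    #Q = c }

/-- `ds(f)` for `f : λ → ρ`. -/
def ds (ρ lam : Cardinal) (f : lam.out → ρ.out) : Cardinal :=
  sInf { c | ∃ Z : Set (Set lam.out),
    (∀ z ∈ Z, #z = ρ) ∧
    (∀ B : Set lam.out, (∀ α : ρ.out, #(↥(B ∩ f ⁻¹' {α})) = lam) →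
      ∃ z ∈ Z, #(↥(f '' (z ∩ B))) = ρ) ∧
    #Z = c }

/-- The Džamonja–Shelah number `DS(ρ, λ) = sup { ds(f) : f : λ → ρ }`. -/
def DS (ρ lam : Cardinal) : Cardinal := ⨆ f : lam.out → ρ.out, ds ρ lam f

/-- Cofinality of a cardinal. -/
def cf (c : Cardinal) : Cardinal := c.ord.cof

/-- `u(σ, λ) = cov(λ, σ, σ, ω)`. -/
def u (σ lam : Cardinal) : Cardinal := cov lam σ σ ℵ₀

/-- The `o`-th iterated cardinal successor of `c`. -/
def succIter (c : Cardinal) (o : Ordinal) : Cardinal :=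
  Cardinal.preAleph (Cardinal.preAleph.symm c + o)


section Aux

universe u

def IsCover (α : Type u) (r2 r3 r4 : Cardinal.{u}) (X : Set (Set α)) : Prop :=
  (∀ x ∈ X, #x < r2) ∧
  (∀ b : Set α, #b < r3 → ∃ Q : Set (Set α), Q ⊆ X ∧ #Q < r4 ∧ b ⊆ ⋃₀ Q)

def covT (α : Type u) (r2 r3 r4 : Cardinal.{u}) : Cardinal :=
  sInf { c | ∃ X : Set (Set α), IsCover α r2 r3 r4 X ∧ #X = c }

variable {r2 r3 r4 : Cardinal.{u}}

lemma cover_all (α : Type u) (h23 : r3 ≤ r2) (h4 : 2 ≤ r4) :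
    IsCover α r2 r3 r4 {x : Set α | #x < r2} := by
  constructor
  · exact fun x hx => hx
  · intro b hb
    refine ⟨{b}, ?_, ?_, by simp⟩
    · simpa using hb.trans_le h23
    · simpa using lt_of_lt_of_le (by norm_num) h4

lemma covT_set_nonempty (α : Type u) (h23 : r3 ≤ r2) (h4 : 2 ≤ r4) :
    { c | ∃ X : Set (Set α), IsCover α r2 r3 r4 X ∧ #X = c }.Nonempty :=
  ⟨_, _, cover_all α h23 h4, rfl⟩

lemma covT_le_two_pow (α : Type u) (h23 : r3 ≤ r2) (h4 : 2 ≤ r4) :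
    covT α r2 r3 r4 ≤ 2 ^ #α := by
  refine le_trans (csInf_le (OrderBot.bddBelow _) ⟨_, cover_all α h23 h4, rfl⟩) ?_
  calc #{x : Set α | #x < r2} ≤ #(Set α) := mk_set_le _
  _ = 2 ^ #α := by simp [mk_set]

lemma covT_mono {α β : Type u} (h23 : r3 ≤ r2) (h4 : 2 ≤ r4)
    (f : α ↪ β) : covT α r2 r3 r4 ≤ covT β r2 r3 r4 := by
  obtain ⟨X, hX, hXc⟩ := csInf_mem (covT_set_nonempty β h23 h4 (r2 := r2) (r3 := r3) (r4 := r4))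
  refine le_trans (csInf_le (OrderBot.bddBelow _)
    ⟨(fun x => f ⁻¹' x) '' X, ⟨?_, ?_⟩, rfl⟩) (le_trans mk_image_le hXc.le)
  · rintro x ⟨y, hy, rfl⟩
    exact lt_of_le_of_lt (mk_preimage_of_injective f y f.injective) (hX.1 y hy)
  · intro b hb
    obtain ⟨Q, hQX, hQc, hQcov⟩ := hX.2 (f '' b) (mk_image_le.trans_lt hb)
    refine ⟨(fun x => f ⁻¹' x) '' Q, Set.image_mono hQX,
      mk_image_le.trans_lt hQc, ?_⟩
    intro a ha
    obtain ⟨q, hq, hfa⟩ := hQcov ⟨a, ha, rfl⟩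
    exact ⟨f ⁻¹' q, ⟨q, hq, rfl⟩, hfa⟩

lemma le_of_isCover {α : Type u} (h2 : ℵ₀ ≤ r2) (h3 : ℵ₀ ≤ r3)
    {X : Set (Set α)} (hX : IsCover α r2 r3 r4 X) : #α ≤ max (#X) r2 := by
  have hunion : ∀ a : α, a ∈ ⋃₀ X := by
    intro a
    obtain ⟨Q, hQX, _, hQcov⟩ := hX.2 {a} (by
      simpa using lt_of_lt_of_le (by exact_mod_cast one_lt_aleph0) h3)
    exact Set.sUnion_subset_sUnion hQX (hQcov rfl)
  have h1 : #α ≤ #(⋃₀ X) := by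
    rw [show ⋃₀ X = Set.univ from Set.eq_univ_of_forall hunion]; simp
  rcases Set.eq_empty_or_nonempty X with hE | hNE
  · subst hE
    simp only [Set.sUnion_empty, mk_eq_zero_iff.mpr] at h1
    have : #α = 0 := le_antisymm (by simpa using h1) zero_le
    simp [this]
  · have : Nonempty X := hNE.to_subtype
    have h2' : #(⋃₀ X) ≤ #X * r2 := by
      refine (mk_sUnion_le X).trans (mul_le_mul_right ?_ _)
      exact ciSup_le' fun s => (hX.1 s s.2).le
    have h3' : #X * r2 ≤ max (#X) r2 := by
      calc #X * r2 ≤ max (#X) r2 * max (#X) r2 :=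
            mul_le_mul' (le_max_left _ _) (le_max_right _ _)
      _ = max (#X) r2 := mul_eq_self (h2.trans (le_max_right _ _))
    exact h1.trans (h2'.trans h3')

lemma le_covT {α : Type u} (h2 : ℵ₀ ≤ r2) (h3 : ℵ₀ ≤ r3) (h23 : r3 ≤ r2) (h4 : 2 ≤ r4)
    (hα : r2 < #α) : #α ≤ covT α r2 r3 r4 := by
  refine le_csInf (covT_set_nonempty α h23 h4) ?_
  rintro c ⟨X, hX, rfl⟩
  rcases le_max_iff.mp (le_of_isCover h2 h3 hX) with h | h
  · exact h
  · exact absurd h hα.not_ge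

lemma cov_eq (r1 r2 r3 r4 : Cardinal) : cov r1 r2 r3 r4 = covT r1.out r2 r3 r4 := by
  unfold cov covT IsCover
  congr 1; ext c; constructor
  · rintro ⟨X, a, b, c'⟩; exact ⟨X, ⟨a, b⟩, c'⟩
  · rintro ⟨X, ⟨a, b⟩, c'⟩; exact ⟨X, a, b, c'⟩

end Aux

theorem stmt12 (r1 r2 r3 r4 : Cardinal)
    (hlim : ∀ c : Cardinal, c < r1 → Order.succ c < r1)
    (h12 : r2 < r1) (h23 : r3 ≤ r2)
    (h3 : ℵ₀ ≤ r3) (h34 : r4 ≤ r3) (h4 : 2 ≤ r4) (hcf : r3 ≤ cf r1) :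
    cov r1 r2 r3 r4 = sSup { c | ∃ ρ, r2 ≤ ρ ∧ ρ < r1 ∧ c = cov ρ r2 r3 r4 } := by
  have h2 : ℵ₀ ≤ r2 := h3.trans h23
  have hr1 : ℵ₀ ≤ r1 := h2.trans h12.le
  set S := { c | ∃ ρ, r2 ≤ ρ ∧ ρ < r1 ∧ c = cov ρ r2 r3 r4 } with hSdef
  have hSne : S.Nonempty := ⟨cov r2 r2 r3 r4, r2, le_rfl, h12, rfl⟩
  have hSbdd : BddAbove S := by
    refine ⟨2 ^ r1, ?_⟩
    rintro c ⟨ρ, hρ2, hρ1, rfl⟩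
    rw [cov_eq]
    refine (covT_le_two_pow _ h23 h4).trans ?_
    rw [mk_out]
    exact power_le_power_left two_ne_zero hρ1.le
  -- each cov ρ ≤ cov r1
  have hcov_le : ∀ ρ : Cardinal, ρ ≤ r1 → cov ρ r2 r3 r4 ≤ cov r1 r2 r3 r4 := by
    intro ρ hρ
    rw [cov_eq, cov_eq]
    obtain ⟨f⟩ : Nonempty (ρ.out ↪ r1.out) := by
      rw [← Cardinal.le_def, mk_out, mk_out]; exact hρ
    exact covT_mono h23 h4 f
  have hsup_le : sSup S ≤ cov r1 r2 r3 r4 := by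
    refine csSup_le hSne ?_
    rintro c ⟨ρ, hρ2, hρ1, rfl⟩
    exact hcov_le ρ hρ1.le
  -- sSup S ≥ r1
  have hsup_ge : r1 ≤ sSup S := by
    refine le_of_forall_lt fun c hc => ?_
    set ρ := Order.succ (max c r2) with hρdef
    have hρ1 : ρ < r1 := hlim _ (max_lt hc h12)
    have hρ2 : r2 < ρ := lt_of_le_of_lt (le_max_right c r2) (Order.lt_succ _)
    have hmem : cov ρ r2 r3 r4 ∈ S := ⟨ρ, hρ2.le, hρ1, rfl⟩
    have hρcov : ρ ≤ cov ρ r2 r3 r4 := by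
      rw [cov_eq]
      refine le_trans (le_of_eq (mk_out ρ).symm) (le_covT h2 h3 h23 h4 ?_)
      rw [mk_out]; exact hρ2
    have : c < cov ρ r2 r3 r4 :=
      lt_of_lt_of_le (lt_of_le_of_lt (le_max_left c r2) ((Order.lt_succ _).trans_le hρcov)) le_rfl
    exact this.trans_le (le_csSup hSbdd hmem)
  have hsupℵ : ℵ₀ ≤ sSup S := hr1.trans hsup_ge
  refine le_antisymm ?_ hsup_le
  -- main direction
  rw [cov_eq]
  obtain ⟨e⟩ : Nonempty (r1.out ≃ r1.ord.ToType) := by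
    rw [← Cardinal.eq, mk_out, mk_ord_toType]
  set A : r1.ord.ToType → Set r1.out := fun i => e ⁻¹' (Set.Iio i) with hAdef
  have hAcard : ∀ i, #(A i) < r1 := by
    intro i
    have : A i = e.symm '' (Set.Iio i) := by
      rw [Equiv.image_eq_preimage_symm]; rfl
    rw [this, mk_image_eq e.symm.injective]
    exact mk_Iio_ord_toType i
  have H : ∀ i, ∃ X : Set (Set (A i)), IsCover (A i) r2 r3 r4 X ∧ #X ≤ sSup S := by
    intro i
    set ρ := max (#(A i)) r2 with hρdef
    have hρ1 : ρ < r1 := max_lt (hAcard i) h12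
    obtain ⟨f⟩ : Nonempty (↥(A i) ↪ ρ.out) := by
      rw [← Cardinal.le_def, mk_out]; exact le_max_left _ _
    have h1 : covT (↥(A i)) r2 r3 r4 ≤ cov ρ r2 r3 r4 := by
      rw [cov_eq]; exact covT_mono h23 h4 f
    have h2' : cov ρ r2 r3 r4 ≤ sSup S := le_csSup hSbdd ⟨ρ, le_max_right _ _, hρ1, rfl⟩
    obtain ⟨X, hX, hXc⟩ := csInf_mem (covT_set_nonempty (↥(A i)) h23 h4 (r2 := r2) (r3 := r3) (r4 := r4))
    exact ⟨X, hX, hXc.le.trans (h1.trans h2')⟩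
  choose Xi hXi hXic using H
  set Y : Set (Set r1.out) := ⋃ i, (fun x : Set (A i) => (Subtype.val : A i → r1.out) '' x) '' (Xi i) with hYdef
  have hYcover : IsCover r1.out r2 r3 r4 Y := by
    constructor
    · rintro x hx
      simp only [hYdef, Set.mem_iUnion, Set.mem_image] at hx
      obtain ⟨i, y, hy, rfl⟩ := hx
      rw [mk_image_eq Subtype.val_injective]
      exact (hXi i).1 y hy
    · intro b hb
      -- find a bound
      have hbd : Set.Bounded (· < ·) (e '' b) := by
        by_contra hnb
        rw [Set.not_bounded_iff] at hnb
        have hcof : IsCofinal (e '' b) := fun x => by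
          obtain ⟨y, hy, hxy⟩ := hnb x
          exact ⟨y, hy, not_lt.mp hxy⟩
        have := (Order.cof_le hcof).trans_lt (mk_image_le.trans_lt hb)
        rw [Ordinal.cof_toType] at this
        exact absurd (this.trans_le hcf) (lt_irrefl _)
      obtain ⟨a, ha⟩ := hbd
      have hbA : b ⊆ A a := fun t ht => ha (e t) ⟨t, ht, rfl⟩
      set b' : Set (A a) := Subtype.val ⁻¹' b with hb'def
      have hb'c : #b' < r3 :=
        lt_of_le_of_lt (mk_preimage_of_injective _ _ Subtype.val_injective) hb
      obtain ⟨Q', hQ'X, hQ'c, hQ'cov⟩ := (hXi a).2 b' hb'c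
      refine ⟨(fun x : Set (A a) => (Subtype.val : A a → r1.out) '' x) '' Q', ?_, mk_image_le.trans_lt hQ'c, ?_⟩
      · exact le_trans (Set.image_mono hQ'X) (Set.subset_iUnion (fun i => (fun x : Set (A i) => (Subtype.val : A i → r1.out) '' x) '' (Xi i)) a)
      · intro t ht
        obtain ⟨q, hq, htq⟩ := hQ'cov (show (⟨t, hbA ht⟩ : A a) ∈ b' from ht)
        exact ⟨Subtype.val '' q, ⟨q, hq, rfl⟩, ⟨⟨t, hbA ht⟩, htq, rfl⟩⟩
  have hYc : #Y ≤ sSup S := by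
    have : Nonempty r1.ord.ToType := by
      rw [Ordinal.toType_nonempty_iff_ne_zero, ne_eq, Cardinal.ord_eq_zero]
      exact fun h => (aleph0_pos.trans_le hr1).ne' h
    refine le_trans (mk_iUnion_le _) ?_
    have h1 : #(r1.ord.ToType) = r1 := mk_ord_toType r1
    have h2' : ⨆ i, #((fun x : Set (A i) => (Subtype.val : A i → r1.out) '' x) '' (Xi i)) ≤ sSup S :=
      ciSup_le' fun i => mk_image_le.trans (hXic i)
    calc #(r1.ord.ToType) * ⨆ i, #((fun x : Set (A i) => (Subtype.val : A i → r1.out) '' x) '' (Xi i))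
        ≤ r1 * sSup S := by rw [h1]; exact mul_le_mul_right h2' _
      _ ≤ sSup S * sSup S := mul_le_mul_left hsup_ge _
      _ = sSup S := mul_eq_self hsupℵ
  exact le_trans (csInf_le (OrderBot.bddBelow _) ⟨Y, hYcover, rfl⟩) hYc
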